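/- Let (A,B) be a NITA with non-real b_3 ∈ B of degree 3 satisfying b_3·b̄_3 = 1 + c_8 and b_3² = b̄_3 + b_6 where b_6 ∈ B is non-real, with no nontrivial basis elements of degree 1 or 2, and suppose b_3·b_6 = c_8 + b_10 with b_10 ∈ B real of degree 10. Then: (1) b̄_3·b_6 = b_3 + b_15 for some b_15 ∈ B of degree 15; (2) b_3·c_8 = b_3 + b̄_6 + b_15; (3) b_3·b_10 = b_15 + b̄_6 + c̄_9 for some c_9 ∈ B of degree 9; (4) b_3·b_15 = 2·b̄_15 + b_6 + c_9; and (5) b_6² = 2·b̄_6 + c̄_9 + b_15. -/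
import Mathlib


/-- A normalized table algebra datum on a commutative `ℂ`-algebra `A`:
a distinguished basis `B` containing `1`, an involutive algebra
endomorphism `bar` permuting `B`, a bilinear form for which `B` is
orthonormal and which satisfies `(a, bc) = (a·b̄, c)`, nonnegative real
structure constants, and a degree homomorphism positive on `B`. -/
structure TAData (A : Type) [CommRing A] [Algebra ℂ A] : Type where
  B : Finset A
  one_mem : (1 : A) ∈ B
  indep : LinearIndependent ℂ (fun b : {x : A // x ∈ B} => (b : A))
  span_top : Submodule.span ℂ (B : Set A) = ⊤
  bar : A →ₐ[ℂ] A
  bar_bar : ∀ a : A, bar (bar a) = a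
  bar_mem : ∀ b ∈ B, bar b ∈ B
  ip : A →ₗ[ℂ] A →ₗ[ℂ] ℂ
  ip_symm : ∀ a b : A, ip a b = ip b a
  ip_self : ∀ b ∈ B, ip b b = 1
  ip_ne : ∀ b ∈ B, ∀ c ∈ B, b ≠ c → ip b c = 0
  ip_assoc : ∀ a b c : A, ip a (b * c) = ip (a * bar b) c
  struct_nonneg : ∀ b ∈ B, ∀ c ∈ B, ∀ d ∈ B, ∃ r : ℝ, 0 ≤ r ∧ ip (b * c) d = (r : ℂ)
  deg : A →ₐ[ℂ] ℂ
  deg_pos : ∀ b ∈ B, ∃ r : ℝ, 0 < r ∧ deg b = (r : ℂ)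

namespace TAData

variable {A : Type} [CommRing A] [Algebra ℂ A]

/-- Integrality (making a table algebra a NITA): all structure constants are
nonnegative integers and all degrees are positive integers. -/
def Integral (T : TAData A) : Prop :=
  (∀ b ∈ T.B, ∀ c ∈ T.B, ∀ d ∈ T.B, ∃ n : ℕ, T.ip (b * c) d = (n : ℂ)) ∧
  (∀ b ∈ T.B, ∃ n : ℕ, 0 < n ∧ T.deg b = (n : ℂ))

/-- `L₁(B) = {1}` and `L₂(B) = ∅`: no nontrivial basis elements of degree 1 or 2. -/
def NoSmall (T : TAData A) : Prop :=
  (∀ b ∈ T.B, T.deg b = 1 → b = 1) ∧ (∀ b ∈ T.B, T.deg b ≠ 2)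

/-- The table algebra is generated (as an algebra) by `b` (and its conjugate). -/
def GeneratedBy (T : TAData A) (b : A) : Prop :=
  Algebra.adjoin ℂ ({b, T.bar b} : Set A) = ⊤

/-- A table subset of `B`: contains `1`, closed under the involution and under
supports of products. -/
def IsTableSubset (T : TAData A) (C : Set A) : Prop :=
  C ⊆ ↑T.B ∧ (1 : A) ∈ C ∧ (∀ b ∈ C, T.bar b ∈ C) ∧
    ∀ b ∈ C, ∀ c ∈ C, ∀ d ∈ T.B, T.ip (b * c) d ≠ 0 → d ∈ C

lemma ip_one_eq (T : TAData A) (a b : A) : T.ip a b = T.ip (a * T.bar b) 1 := by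
  have h := T.ip_assoc a b 1
  rwa [mul_one] at h

lemma ip_bar (T : TAData A) (a b : A) : T.ip (T.bar a) (T.bar b) = T.ip a b := by
  rw [T.ip_symm, T.ip_one_eq (T.bar b) (T.bar a), T.bar_bar, mul_comm, ← T.ip_one_eq]

lemma ip_prod (T : TAData A) (a b c : A) : T.ip (a * b) c = T.ip (c * T.bar a) b := by
  rw [T.ip_symm]; exact T.ip_assoc c a b

lemma ip_sub_left (T : TAData A) (a b c : A) :
    T.ip (a - b) c = T.ip a c - T.ip b c := by
  rw [map_sub, LinearMap.sub_apply]

lemma ip_add_left (T : TAData A) (a b c : A) :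
    T.ip (a + b) c = T.ip a c + T.ip b c := by
  rw [map_add, LinearMap.add_apply]

open Classical in
lemma ip_delta (T : TAData A) {b c : A} (hb : b ∈ T.B) (hc : c ∈ T.B) :
    T.ip b c = if b = c then 1 else 0 := by
  split
  · next h => rw [h]; exact T.ip_self c hc
  · next h => exact T.ip_ne b hb c hc h

lemma decomp (T : TAData A) (a : A) : a = ∑ d ∈ T.B, T.ip a d • d := by
  classical
  let φ : A →ₗ[ℂ] A :=
    { toFun := fun x => ∑ d ∈ T.B, T.ip x d • d
      map_add' := by
        intro x y
        simp only [map_add, LinearMap.add_apply, add_smul, Finset.sum_add_distrib]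
      map_smul' := by
        intro r x
        simp only [map_smul, LinearMap.smul_apply, smul_assoc, Finset.smul_sum,
          RingHom.id_apply] }
  have hφ : φ = LinearMap.id := by
    apply LinearMap.ext_on T.span_top
    intro b hb
    have hbB : b ∈ T.B := Finset.mem_coe.mp hb
    show ∑ d ∈ T.B, T.ip b d • d = b
    have : ∀ d ∈ T.B, T.ip b d • d = if b = d then d else 0 := by
      intro d hd
      rw [T.ip_delta hbB hd]
      split <;> simp
    rw [Finset.sum_congr rfl this, Finset.sum_ite_eq T.B b (fun d => d)]
    simp only [hbB, if_true]
  have := congrArg (fun ψ : A →ₗ[ℂ] A => ψ a) hφ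
  exact this.symm

lemma ip_self_eq_sum (T : TAData A) (a : A) :
    T.ip a a = ∑ d ∈ T.B, (T.ip a d) ^ 2 := by
  nth_rewrite 2 [T.decomp a]
  rw [map_sum]
  refine Finset.sum_congr rfl fun d hd => ?_
  rw [map_smul, smul_eq_mul, sq]

lemma deg_eq_sum (T : TAData A) (a : A) :
    T.deg a = ∑ d ∈ T.B, T.ip a d * T.deg d := by
  conv_lhs => rw [T.decomp a]
  rw [map_sum]
  refine Finset.sum_congr rfl fun d hd => ?_
  rw [map_smul, smul_eq_mul]

def NNc (T : TAData A) (a : A) : Prop := ∀ d ∈ T.B, ∃ n : ℕ, T.ip a d = (n : ℂ)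

lemma NNc_mul (T : TAData A) (hInt : T.Integral) {b c : A} (hb : b ∈ T.B) (hc : c ∈ T.B) :
    T.NNc (b * c) := fun d hd => hInt.1 b hb c hc d hd

lemma NNc_coords (T : TAData A) {a : A} (h : T.NNc a) :
    ∃ F : A → ℕ, ∀ d ∈ T.B, T.ip a d = (F d : ℂ) := by
  classical
  refine ⟨fun d => if hd : d ∈ T.B then (h d hd).choose else 0, fun d hd => ?_⟩
  simp only [hd, dif_pos]
  exact (h d hd).choose_spec

lemma degs_nat (T : TAData A) (hInt : T.Integral) :
    ∃ M : A → ℕ, ∀ d ∈ T.B, 0 < M d ∧ T.deg d = (M d : ℂ) := by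
  classical
  refine ⟨fun d => if hd : d ∈ T.B then (hInt.2 d hd).choose else 0, fun d hd => ?_⟩
  simp only [hd, dif_pos]
  exact (hInt.2 d hd).choose_spec

lemma deg_nat_sum (T : TAData A) {a : A} {F M : A → ℕ}
    (hF : ∀ d ∈ T.B, T.ip a d = (F d : ℂ)) (hM : ∀ d ∈ T.B, T.deg d = (M d : ℂ)) :
    T.deg a = ((∑ d ∈ T.B, F d * M d : ℕ) : ℂ) := by
  rw [T.deg_eq_sum]
  push_cast
  exact Finset.sum_congr rfl fun d hd => by rw [hF d hd, hM d hd]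

lemma norm_nat_sum (T : TAData A) {a : A} {F : A → ℕ}
    (hF : ∀ d ∈ T.B, T.ip a d = (F d : ℂ)) :
    T.ip a a = ((∑ d ∈ T.B, F d ^ 2 : ℕ) : ℂ) := by
  rw [T.ip_self_eq_sum]
  push_cast
  exact Finset.sum_congr rfl fun d hd => by rw [hF d hd]

lemma coeff_mul_deg_le (T : TAData A) (hInt : T.Integral) {a : A} (hNN : T.NNc a)
    {N n m : ℕ} {d : A} (hd : d ∈ T.B) (hN : T.deg a = (N : ℂ))
    (hn : T.ip a d = (n : ℂ)) (hm : T.deg d = (m : ℂ)) : n * m ≤ N := by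
  obtain ⟨F, hF⟩ := T.NNc_coords hNN
  obtain ⟨M, hM⟩ := T.degs_nat hInt
  have hsum : T.deg a = ((∑ e ∈ T.B, F e * M e : ℕ) : ℂ) :=
    T.deg_nat_sum hF (fun e he => (hM e he).2)
  have hNeq : N = ∑ e ∈ T.B, F e * M e := Nat.cast_injective (hN.symm.trans hsum)
  have hFd : F d = n := Nat.cast_injective ((hF d hd).symm.trans hn)
  have hMd : M d = m := Nat.cast_injective (((hM d hd).2).symm.trans hm)
  rw [hNeq, ← hFd, ← hMd]
  exact Finset.single_le_sum (f := fun e => F e * M e) (fun e _ => Nat.zero_le _) hd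

lemma eq_zero_of_coords (T : TAData A) {a : A} (h : ∀ d ∈ T.B, T.ip a d = 0) : a = 0 := by
  rw [T.decomp a]
  exact Finset.sum_eq_zero fun d hd => by rw [h d hd, zero_smul]

lemma exists_pos_coeff (T : TAData A) {a : A} (hNN : T.NNc a) (ha : a ≠ 0) :
    ∃ d ∈ T.B, ∃ n : ℕ, 0 < n ∧ T.ip a d = (n : ℂ) := by
  by_contra h
  push_neg at h
  apply ha
  apply T.eq_zero_of_coords
  intro d hd
  obtain ⟨n, hn⟩ := hNN d hd
  rcases Nat.eq_zero_or_pos n with h0 | hpos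
  · rw [hn, h0, Nat.cast_zero]
  · exact absurd hn (h d hd n hpos)

lemma eq_basis_of_norm_one (T : TAData A) {a : A} (hNN : T.NNc a)
    (hnorm : T.ip a a = 1) : ∃ d ∈ T.B, a = d := by
  classical
  obtain ⟨F, hF⟩ := T.NNc_coords hNN
  have hsum : (∑ d ∈ T.B, F d ^ 2) = 1 := by
    have h1 : ((∑ d ∈ T.B, F d ^ 2 : ℕ) : ℂ) = ((1 : ℕ) : ℂ) := by
      rw [← T.norm_nat_sum hF, hnorm, Nat.cast_one]
    exact Nat.cast_injective h1
  obtain ⟨d, hd, hFd⟩ : ∃ d ∈ T.B, F d ≠ 0 := by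
    by_contra h
    push_neg at h
    have : ∑ d ∈ T.B, F d ^ 2 = 0 := Finset.sum_eq_zero fun d hd => by rw [h d hd]; ring
    omega
  have hrest : F d ^ 2 + ∑ e ∈ T.B.erase d, F e ^ 2 = 1 := by
    rw [Finset.add_sum_erase T.B (fun e => F e ^ 2) hd]
    exact hsum
  have hFdsq : 1 ≤ F d ^ 2 := Nat.one_le_iff_ne_zero.mpr (pow_ne_zero 2 hFd)
  have hFd1 : F d = 1 := by
    by_contra hne1
    have h2 : 2 ≤ F d := by omega
    have : 2 ^ 2 ≤ F d ^ 2 := Nat.pow_le_pow_left h2 2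
    omega
  have hzero : ∀ e ∈ T.B.erase d, F e = 0 := by
    intro e he
    have hs0 : ∑ e ∈ T.B.erase d, F e ^ 2 = 0 := by omega
    have := (Finset.sum_eq_zero_iff.mp hs0) e he
    exact pow_eq_zero_iff (by norm_num) |>.mp this
  refine ⟨d, hd, ?_⟩
  rw [T.decomp a, Finset.sum_eq_single_of_mem d hd]
  · rw [hF d hd, hFd1]; norm_num
  · intro e he hne
    rw [hF e he, hzero e (Finset.mem_erase.2 ⟨hne, he⟩), Nat.cast_zero, zero_smul]

lemma NNc_sub (T : TAData A) {a d : A} (hNN : T.NNc a) (hd : d ∈ T.B) {k : ℕ}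
    (hk : T.ip a d = (k : ℂ)) (h1 : 1 ≤ k) : T.NNc (a - d) := by
  intro e he
  rw [T.ip_sub_left]
  by_cases hed : e = d
  · subst hed
    refine ⟨k - 1, ?_⟩
    rw [hk, T.ip_self e he, Nat.cast_sub h1, Nat.cast_one]
  · obtain ⟨n, hn⟩ := hNN e he
    refine ⟨n, ?_⟩
    rw [hn, T.ip_ne d hd e he (fun h => hed h.symm)]
    · ring
    
lemma zero_small (T : TAData A) (hInt : T.Integral) (hSmall : T.NoSmall) {a : A}
    (hNN : T.NNc a) {N : ℕ} (hdeg : T.deg a = (N : ℂ)) (h1 : T.ip a 1 = 0)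
    (hsm : ∀ d ∈ T.B, ∀ m : ℕ, T.deg d = (m : ℂ) → 3 ≤ m → m ≤ N → T.ip a d = 0) :
    a = 0 := by
  by_contra ha
  obtain ⟨d, hd, n, hnpos, hn⟩ := T.exists_pos_coeff hNN ha
  obtain ⟨m, hmpos, hm⟩ := hInt.2 d hd
  have hb : n * m ≤ N := T.coeff_mul_deg_le hInt hNN hd hdeg hn hm
  have hd1 : d ≠ 1 := by
    rintro rfl
    rw [h1] at hn
    exact hnpos.ne' (by exact_mod_cast hn.symm)
  have h3 : 3 ≤ m := by
    by_contra hlt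
    push_neg at hlt
    have hm12 : m = 1 ∨ m = 2 := by omega
    rcases hm12 with rfl | rfl
    · exact hd1 (hSmall.1 d hd (by rw [hm]; norm_num))
    · exact hSmall.2 d hd (by rw [hm]; norm_num)
  have hzero : T.ip a d = 0 :=
    hsm d hd m hm h3 (le_trans (Nat.le_mul_of_pos_left m hnpos) hb)
  rw [hzero] at hn
  exact hnpos.ne' (by exact_mod_cast hn.symm)

lemma eq_basis_of_gap (T : TAData A) (hInt : T.Integral) (hSmall : T.NoSmall) {a : A}
    (hNN : T.NNc a) (hdeg : T.deg a = ((9:ℕ) : ℂ))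
    (hsm : ∀ d ∈ T.B, ∀ m : ℕ, T.deg d = (m : ℂ) → m ≤ 5 → T.ip a d = 0) :
    ∃ d ∈ T.B, T.deg d = ((9:ℕ):ℂ) ∧ a = d := by
  have ha : a ≠ 0 := by
    rintro rfl
    rw [map_zero] at hdeg
    norm_num at hdeg
  obtain ⟨d, hd, n, hnpos, hn⟩ := T.exists_pos_coeff hNN ha
  obtain ⟨m, hmpos, hm⟩ := hInt.2 d hd
  have hb : n * m ≤ 9 := T.coeff_mul_deg_le hInt hNN hd hdeg hn hm
  have h6 : 6 ≤ m := by
    by_contra h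
    push_neg at h
    have hz := hsm d hd m hm (by omega)
    rw [hz] at hn
    exact hnpos.ne' (by exact_mod_cast hn.symm)
  have hn1 : n = 1 := by
    rcases Nat.lt_or_ge n 2 with h | h
    · omega
    · have := Nat.mul_le_mul h h6
      omega
  have hip1 : T.ip a d = ((1:ℕ) : ℂ) := by rw [hn, hn1]
  have hNN' : T.NNc (a - d) := T.NNc_sub hNN hd hip1 le_rfl
  have hd1 : d ≠ 1 := by
    rintro rfl
    have h1 : T.deg (1:A) = 1 := map_one T.deg
    rw [h1] at hm
    have : m = 1 := by exact_mod_cast hm.symm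
    omega
  have hm9 : m ≤ 9 := by
    rw [hn1, one_mul] at hb
    exact hb
  have hdeg' : T.deg (a - d) = ((9 - m : ℕ) : ℂ) := by
    rw [map_sub, hdeg, hm, Nat.cast_sub hm9]
  have h1' : T.ip (a - d) 1 = 0 := by
    rw [T.ip_sub_left, hsm 1 T.one_mem 1 (by rw [map_one]; norm_num) (by omega),
      T.ip_ne d hd 1 T.one_mem hd1]
    ring
  have hz : a - d = 0 := by
    apply T.zero_small hInt hSmall hNN' hdeg' h1'
    intro e he m' hm' h3 hle
    have hed : e ≠ d := by
      rintro rfl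
      rw [hm'] at hm
      have : m' = m := by exact_mod_cast hm
      omega
    rw [T.ip_sub_left, hsm e he m' hm' (by omega), T.ip_ne d hd e he (fun h => hed h.symm)]
    ring
  have had : a = d := sub_eq_zero.mp hz
  exact ⟨d, hd, by rw [← had, hdeg], had⟩

end TAData

/-- Lemma 5.1, parts 1–6: under Hypothesis 5.1 with `b₁₀`
real, `b̄₃b₆ = b₃ + b₁₅`, `b₃c₈ = b₃ + b̄₆ + b₁₅`, `b₃b₁₀ = b₁₅ + b̄₆ + c̄₉`,
`b₃b₁₅ = 2b̄₁₅ + b₆ + c₉` and `b₆² = 2b̄₆ + c̄₉ + b₁₅`. -/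
theorem stmt_10 {A : Type} [CommRing A] [Algebra ℂ A] (T : TAData A)
    (hInt : T.Integral) (hSmall : T.NoSmall)
    (b3 c8 b6 b10 : A)
    (hb3 : b3 ∈ T.B) (hd3 : T.deg b3 = 3) (hnr : T.bar b3 ≠ b3)
    (hgen : T.GeneratedBy b3)
    (hc8 : c8 ∈ T.B) (hd8 : T.deg c8 = 8)
    (hmul : b3 * T.bar b3 = 1 + c8)
    (hb6 : b6 ∈ T.B) (hd6 : T.deg b6 = 6) (hnr6 : T.bar b6 ≠ b6)
    (hsq : b3 * b3 = T.bar b3 + b6)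
    (hb10 : b10 ∈ T.B) (hd10 : T.deg b10 = 10) (hreal10 : T.bar b10 = b10)
    (hprod : b3 * b6 = c8 + b10) :
    ∃ b15 ∈ T.B, T.deg b15 = 15 ∧
      T.bar b3 * b6 = b3 + b15 ∧
      b3 * c8 = b3 + T.bar b6 + b15 ∧
      ∃ c9 ∈ T.B, T.deg c9 = 9 ∧
        b3 * b10 = b15 + T.bar b6 + T.bar c9 ∧
        b3 * b15 = 2 * T.bar b15 + b6 + c9 ∧
        b6 * b6 = 2 * T.bar b6 + T.bar c9 + b15 := by

  classical
  have hb3' : T.bar b3 ∈ T.B := T.bar_mem b3 hb3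
  have hb6' : T.bar b6 ∈ T.B := T.bar_mem b6 hb6
  have neC : ∀ (p q : ℕ), p ≠ q → ((p:ℂ) ≠ (q:ℂ)) := fun p q h hc => h (by exact_mod_cast hc)
  have nedeg : ∀ {x y : A} {p q : ℂ}, T.deg x = p → T.deg y = q → p ≠ q → x ≠ y := by
    intro x y p q hx hy hpq hxy
    rw [hxy, hy] at hx
    exact hpq hx.symm
  have hc8bar : T.bar c8 = c8 := by
    have h := congrArg T.bar hmul
    simp only [map_mul, map_add, map_one, T.bar_bar] at h
    linear_combination hmul - h
  have hsq' : T.bar b3 * T.bar b3 = b3 + T.bar b6 := by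
    have h := congrArg T.bar hsq
    simpa only [map_mul, map_add, T.bar_bar] using h
  have hbar36 : T.bar b3 * T.bar b6 = c8 + b10 := by
    have h := congrArg T.bar hprod
    simpa only [map_mul, map_add, hc8bar, hreal10] using h
  have hd3' : T.deg (T.bar b3) = 3 := by
    have h := congrArg T.deg hsq
    simp only [map_mul, map_add, hd3, hd6] at h
    linear_combination -h
  have hd6' : T.deg (T.bar b6) = 6 := by
    have h := congrArg T.deg hsq'
    simp only [map_mul, map_add, hd3, hd3'] at h
    linear_combination -h
  -- Part 1 : b̄3 b6 = b3 + b15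
  have ipTb3 : T.ip (T.bar b3 * b6) b3 = 1 := by
    rw [T.ip_prod, T.bar_bar, hsq, T.ip_add_left,
      T.ip_ne _ hb3' _ hb6 (nedeg hd3' hd6 (by norm_num)),
      T.ip_self _ hb6]
    ring
  have e1 : T.ip (b3 * b6) (b3 * b6) = T.ip ((1 + c8) * b6) b6 := by
    rw [T.ip_assoc (b3 * b6) b3 b6,
      show b3 * b6 * T.bar b3 = (1 + c8) * b6 by linear_combination b6 * hmul]
  have e3 : T.ip (b3 * b6) (b3 * b6) = 2 := by
    rw [hprod]
    simp only [map_add, LinearMap.add_apply]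
    rw [T.ip_self _ hc8, T.ip_self _ hb10,
      T.ip_ne _ hc8 _ hb10 (nedeg hd8 hd10 (by norm_num)),
      T.ip_ne _ hb10 _ hc8 (nedeg hd10 hd8 (by norm_num))]
    ring
  have e13 : T.ip ((1 + c8) * b6) b6 = 2 := by rw [← e1]; exact e3
  have e2 : T.ip (T.bar b3 * b6) (T.bar b3 * b6) = 2 := by
    rw [T.ip_assoc (T.bar b3 * b6) (T.bar b3) b6, T.bar_bar,
      show T.bar b3 * b6 * b3 = (1 + c8) * b6 by linear_combination b6 * hmul]
    exact e13
  have hNNT : T.NNc (T.bar b3 * b6) := T.NNc_mul hInt hb3' hb6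
  have ipTb3' : T.ip (T.bar b3 * b6) b3 = ((1:ℕ) : ℂ) := by rw [ipTb3]; norm_num
  have hNNS : T.NNc (T.bar b3 * b6 - b3) := T.NNc_sub hNNT hb3 ipTb3' le_rfl
  have hSnorm : T.ip (T.bar b3 * b6 - b3) (T.bar b3 * b6 - b3) = 1 := by
    simp only [map_sub, LinearMap.sub_apply]
    rw [e2, T.ip_symm b3 (T.bar b3 * b6), ipTb3, T.ip_self _ hb3]
    ring
  obtain ⟨b15, hb15, hS⟩ := T.eq_basis_of_norm_one hNNS hSnorm
  have h15 : T.bar b3 * b6 = b3 + b15 := by linear_combination hS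
  have hd15 : T.deg b15 = 15 := by
    have h := congrArg T.deg h15
    simp only [map_mul, map_add, hd3, hd3', hd6] at h
    linear_combination -h
  have hb15' : T.bar b15 ∈ T.B := T.bar_mem b15 hb15
  -- Part 2
  have h2 : b3 * c8 = b3 + T.bar b6 + b15 := by
    linear_combination (-b3) * hmul + T.bar b3 * hsq + hsq' + h15
  have h15bar : b3 * T.bar b6 = T.bar b3 + T.bar b15 := by
    have h := congrArg T.bar h15
    simpa only [map_mul, map_add, T.bar_bar] using h
  have hd15' : T.deg (T.bar b15) = 15 := by
    have h := congrArg T.deg h15bar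
    simp only [map_mul, map_add, hd3, hd3', hd6'] at h
    linear_combination -h
  have h2bar : T.bar b3 * c8 = T.bar b3 + b6 + T.bar b15 := by
    have h := congrArg T.bar h2
    simpa only [map_mul, map_add, T.bar_bar, hc8bar] using h
  have h9 : c8 * b6 = T.bar b3 + b3 * b15 := by
    linear_combination b3 * h15 - b6 * hmul + hsq
  have h10 : T.bar b3 * b15 = b6 * T.bar b6 + b10 - 1 := by
    linear_combination (- T.bar b3) * h15 + b6 * hsq' + hprod - hmul
  -- Part 3 : coordinates of u = b3*b10
  have hNNu : T.NNc (b3 * b10) := T.NNc_mul hInt hb3 hb10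
  have ipu1 : T.ip (b3 * b10) 1 = 0 := by
    rw [T.ip_prod, one_mul]
    exact T.ip_ne _ hb3' _ hb10 (nedeg hd3' hd10 (by norm_num))
  have ipub6' : T.ip (b3 * b10) (T.bar b6) = 1 := by
    rw [T.ip_prod,
      show T.bar b6 * T.bar b3 = c8 + b10 by linear_combination hbar36,
      T.ip_add_left, T.ip_ne _ hc8 _ hb10 (nedeg hd8 hd10 (by norm_num)),
      T.ip_self _ hb10]
    ring
  obtain ⟨t, ht⟩ := T.NNc_mul hInt hb6 hb6' b10 hb10
  have ipub15 : T.ip (b3 * b10) b15 = ((t + 1 : ℕ) : ℂ) := by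
    rw [T.ip_prod,
      show b15 * T.bar b3 = b6 * T.bar b6 + b10 - 1 by linear_combination h10,
      T.ip_sub_left, T.ip_add_left, ht, T.ip_self _ hb10,
      T.ip_ne _ T.one_mem _ hb10 (nedeg (map_one T.deg) hd10 (by norm_num))]
    push_cast
    ring
  have hNN1 : T.NNc (b3 * b10 - T.bar b6) :=
    T.NNc_sub hNNu hb6' (k := 1) (by rw [ipub6']; norm_num) le_rfl
  have ip1b15 : T.ip (b3 * b10 - T.bar b6) b15 = ((t + 1 : ℕ) : ℂ) := by
    rw [T.ip_sub_left, ipub15, T.ip_ne _ hb6' _ hb15 (nedeg hd6' hd15 (by norm_num))]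
    ring
  have hNNR : T.NNc (b3 * b10 - T.bar b6 - b15) := T.NNc_sub hNN1 hb15 ip1b15 (by omega)
  have hdegR : T.deg (b3 * b10 - T.bar b6 - b15) = ((9:ℕ) : ℂ) := by
    simp only [map_sub, map_mul, hd3, hd10, hd6', hd15]
    norm_num
  have ipRb15 : T.ip (b3 * b10 - T.bar b6 - b15) b15 = ((t:ℕ) : ℂ) := by
    rw [T.ip_sub_left, ip1b15, T.ip_self _ hb15]
    push_cast
    ring
  have ht0 : t = 0 := by
    have hb := T.coeff_mul_deg_le hInt hNNR hb15 hdegR ipRb15 (m := 15) (by rw [hd15]; norm_num)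
    omega
  have ht' : T.ip (b6 * T.bar b6) b10 = 0 := by rw [ht, ht0]; norm_num
  -- coefficients of b3*b10 at degrees ≤ 4 vanish
  have huSmall : ∀ d ∈ T.B, ∀ m : ℕ, T.deg d = (m : ℂ) → m ≤ 4 → T.ip (b3 * b10) d = 0 := by
    intro d hd m hm hm4
    rw [T.ip_prod]
    have hNNd : T.NNc (d * T.bar b3) := T.NNc_mul hInt hd hb3'
    obtain ⟨k, hk⟩ := hNNd b10 hb10
    have hdegd : T.deg (d * T.bar b3) = ((m * 3 : ℕ) : ℂ) := by
      rw [map_mul, hm, hd3']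
      push_cast
      ring
    have hbnd : k * 10 ≤ m * 3 :=
      T.coeff_mul_deg_le hInt hNNd hb10 hdegd hk (m := 10) (by rw [hd10]; norm_num)
    rcases Nat.lt_or_ge m 4 with h3 | h4
    · have hk0 : k = 0 := by omega
      rw [hk, hk0]
      norm_num
    · have hm4' : m = 4 := by omega
      subst hm4'
      rcases Nat.eq_zero_or_pos k with h0 | hpos
      · rw [hk, h0]
        norm_num
      · exfalso
        have hk1 : k = 1 := by omega
        have hNNw : T.NNc (d * T.bar b3 - b10) :=
          T.NNc_sub hNNd hb10 (by rw [hk, hk1]) le_rfl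
        have hdegw : T.deg (d * T.bar b3 - b10) = ((2:ℕ) : ℂ) := by
          rw [map_sub, map_mul, hm, hd3', hd10]
          norm_num
        have hdb3 : d ≠ b3 := nedeg hm hd3 (by exact_mod_cast neC 4 3 (by omega))
        have hbar_ne : T.bar d ≠ T.bar b3 := fun h => hdb3 (by rw [← T.bar_bar d, h, T.bar_bar])
        have hw1 : T.ip (d * T.bar b3 - b10) 1 = 0 := by
          rw [T.ip_sub_left, T.ip_prod, one_mul,
            T.ip_ne _ (T.bar_mem d hd) _ hb3' hbar_ne,
            T.ip_ne _ hb10 _ T.one_mem (nedeg hd10 (map_one T.deg) (by norm_num))]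
          ring
        have hwz : d * T.bar b3 - b10 = 0 := by
          apply T.zero_small hInt hSmall hNNw hdegw hw1
          intro e he m' hm' h3' hle'
          exact absurd hle' (by omega)
        have heq : d * T.bar b3 = b10 := sub_eq_zero.mp hwz
        have hdd := congrArg T.deg heq
        rw [map_mul, hm, hd3', hd10] at hdd
        norm_num at hdd
  -- coefficients of R at degrees ≤ 5 vanish
  have hsmR : ∀ d ∈ T.B, ∀ m : ℕ, T.deg d = (m : ℂ) → m ≤ 5 →
      T.ip (b3 * b10 - T.bar b6 - b15) d = 0 := by
    intro d hd m hm hm5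
    have hne6 : T.bar b6 ≠ d := nedeg hd6' hm (by exact_mod_cast neC 6 m (by omega))
    have hne15 : b15 ≠ d := nedeg hd15 hm (by exact_mod_cast neC 15 m (by omega))
    have hipRd : T.ip (b3 * b10 - T.bar b6 - b15) d = T.ip (b3 * b10) d := by
      rw [T.ip_sub_left, T.ip_sub_left, T.ip_ne _ hb6' _ hd hne6, T.ip_ne _ hb15 _ hd hne15]
      ring
    rcases Nat.lt_or_ge m 5 with h4 | h5
    · rw [hipRd]
      exact huSmall d hd m hm (by omega)
    · have hm5' : m = 5 := by omega
      subst hm5'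
      obtain ⟨k, hk⟩ := hNNR d hd
      have hbnd : k * 5 ≤ 9 := T.coeff_mul_deg_le hInt hNNR hd hdegR hk hm
      rcases Nat.eq_zero_or_pos k with h0 | hpos
      · rw [hk, h0]
        norm_num
      · exfalso
        have hk1 : k = 1 := by omega
        have hNNR' : T.NNc (b3 * b10 - T.bar b6 - b15 - d) :=
          T.NNc_sub hNNR hd (by rw [hk, hk1]) le_rfl
        have hdegR' : T.deg (b3 * b10 - T.bar b6 - b15 - d) = ((4:ℕ) : ℂ) := by
          rw [map_sub, hdegR, hm]
          push_cast
          norm_num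
        have hd1 : d ≠ 1 := nedeg hm (map_one T.deg) (by exact_mod_cast neC 5 1 (by omega))
        have hR1 : T.ip (b3 * b10 - T.bar b6 - b15) 1 = 0 := by
          rw [T.ip_sub_left, T.ip_sub_left, ipu1,
            T.ip_ne _ hb6' _ T.one_mem (nedeg hd6' (map_one T.deg) (by norm_num)),
            T.ip_ne _ hb15 _ T.one_mem (nedeg hd15 (map_one T.deg) (by norm_num))]
          ring
        have h1' : T.ip (b3 * b10 - T.bar b6 - b15 - d) 1 = 0 := by
          rw [T.ip_sub_left, hR1, T.ip_ne _ hd _ T.one_mem hd1]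
          ring
        have hz : b3 * b10 - T.bar b6 - b15 - d = 0 := by
          apply T.zero_small hInt hSmall hNNR' hdegR' h1'
          intro e he m' hm' h3' hle'
          have hne_ed : d ≠ e := nedeg hm hm' (by exact_mod_cast neC 5 m' (by omega))
          have hne6e : T.bar b6 ≠ e := nedeg hd6' hm' (by exact_mod_cast neC 6 m' (by omega))
          have hne15e : b15 ≠ e := nedeg hd15 hm' (by exact_mod_cast neC 15 m' (by omega))
          rw [T.ip_sub_left, T.ip_sub_left, T.ip_sub_left,
            huSmall e he m' hm' (by omega),
            T.ip_ne _ hb6' _ he hne6e, T.ip_ne _ hb15 _ he hne15e, T.ip_ne _ hd _ he hne_ed]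
          ring
        have heq : b3 * b10 - T.bar b6 - b15 = d := sub_eq_zero.mp hz
        have hdd := congrArg T.deg heq
        rw [hdegR, hm] at hdd
        norm_num at hdd
  obtain ⟨c, hcB, hdc, hRc⟩ := T.eq_basis_of_gap hInt hSmall hNNR hdegR hsmR
  have hu : b3 * b10 = T.bar b6 + b15 + c := by linear_combination hRc
  have hcbar : T.bar c ∈ T.B := T.bar_mem c hcB
  have hdcC : T.deg c = 9 := by
    rw [hdc]
    norm_num
  have hubar : T.bar b3 * b10 = b6 + T.bar b15 + T.bar c := by
    have h := congrArg T.bar hu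
    simpa only [map_mul, map_add, T.bar_bar, hreal10] using h
  have hdc' : T.deg (T.bar c) = 9 := by
    have h := congrArg T.deg hubar
    simp only [map_mul, map_add, hd3', hd10, hd6, hd15'] at h
    linear_combination -h
  -- Part 5
  have hb6sq : b6 * b6 = T.bar b6 + T.bar b6 + c + b15 := by
    linear_combination b3 * hprod - b6 * hsq - h15 + h2 + hu
  have hb6sqbar : T.bar b6 * T.bar b6 = b6 + b6 + T.bar c + T.bar b15 := by
    have h := congrArg T.bar hb6sq
    simpa only [map_mul, map_add, T.bar_bar] using h
  have hc8b15 : c8 * b15 = b15 + T.bar b6 + c + b6 * T.bar b15 := by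
    linear_combination (-b15) * hmul - T.bar b3 * h9 + b6 * h2bar - hsq' + h15 + hb6sq
  have hb10b6 : b10 * b6 = T.bar b3 + T.bar b15 + T.bar b15 + b3 * c := by
    linear_combination b3 * hb6sq - b6 * hprod - h9 + 2 * h15bar
  have hb6b15 : b6 * b15 = c8 + b10 + b10 - 1 + b6 * T.bar b6 + T.bar b3 * c := by
    linear_combination (-b6) * h15 + T.bar b3 * hb6sq - hprod + 2 * hbar36 + h10
  -- Part 4 : coordinates of P = b3*b15
  have hNNP : T.NNc (b3 * b15) := T.NNc_mul hInt hb3 hb15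
  have ipPb6 : T.ip (b3 * b15) b6 = 1 := by
    rw [T.ip_prod, show b6 * T.bar b3 = b3 + b15 by linear_combination h15,
      T.ip_add_left, T.ip_ne _ hb3 _ hb15 (nedeg hd3 hd15 (by norm_num)),
      T.ip_self _ hb15]
    ring
  have ipb6b15barb6' : T.ip (b6 * T.bar b15) (T.bar b6) = 1 := by
    rw [T.ip_prod, hb6sqbar, T.ip_add_left, T.ip_add_left, T.ip_add_left,
      T.ip_ne _ hb6 _ hb15' (nedeg hd6 hd15' (by norm_num)),
      T.ip_ne _ hcbar _ hb15' (nedeg hdc' hd15' (by norm_num)),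
      T.ip_self _ hb15']
    ring
  have ipc8b15b6' : T.ip (c8 * b15) (T.bar b6) = 2 := by
    rw [hc8b15]
    simp only [map_add, LinearMap.add_apply]
    rw [T.ip_ne _ hb15 _ hb6' (nedeg hd15 hd6' (by norm_num)),
      T.ip_self _ hb6',
      T.ip_ne _ hcB _ hb6' (nedeg hdcC hd6' (by norm_num)),
      ipb6b15barb6']
    ring
  have ipc8b6b15' : T.ip (c8 * b6) (T.bar b15) = 2 := by
    rw [T.ip_prod, hc8bar, show T.bar b15 * c8 = c8 * T.bar b15 from mul_comm _ _]
    have hbarred : T.bar (c8 * b15) = c8 * T.bar b15 := by rw [map_mul, hc8bar]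
    rw [← hbarred, ← show T.bar (T.bar b6) = b6 from T.bar_bar b6, T.ip_bar]
    exact ipc8b15b6'
  have ipPb15bar : T.ip (b3 * b15) (T.bar b15) = 2 := by
    rw [show b3 * b15 = c8 * b6 - T.bar b3 by linear_combination -h9,
      T.ip_sub_left, ipc8b6b15',
      T.ip_ne _ hb3' _ hb15' (nedeg hd3' hd15' (by norm_num))]
    ring
  have ip2 : T.ip (b3 * b15 - b6) (T.bar b15) = ((2:ℕ) : ℂ) := by
    rw [T.ip_sub_left, ipPb15bar, T.ip_ne _ hb6 _ hb15' (nedeg hd6 hd15' (by norm_num))]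
    norm_num
  have hNNQ1 : T.NNc (b3 * b15 - b6) :=
    T.NNc_sub hNNP hb6 (k := 1) (by rw [ipPb6]; norm_num) le_rfl
  have hNNQ2 : T.NNc (b3 * b15 - b6 - T.bar b15) := T.NNc_sub hNNQ1 hb15' ip2 (by omega)
  have ip3 : T.ip (b3 * b15 - b6 - T.bar b15) (T.bar b15) = ((1:ℕ) : ℂ) := by
    rw [T.ip_sub_left, ip2, T.ip_self _ hb15']
    norm_num
  have hNNQ : T.NNc (b3 * b15 - b6 - T.bar b15 - T.bar b15) :=
    T.NNc_sub hNNQ2 hb15' ip3 le_rfl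
  have hdegQ : T.deg (b3 * b15 - b6 - T.bar b15 - T.bar b15) = ((9:ℕ) : ℂ) := by
    simp only [map_sub, map_mul, hd3, hd15, hd6, hd15']
    norm_num
  have hPSmall : ∀ d ∈ T.B, ∀ m : ℕ, T.deg d = (m : ℂ) → m ≤ 4 → T.ip (b3 * b15) d = 0 := by
    intro d hd m hm hm4
    rw [T.ip_prod]
    have hNNd : T.NNc (d * T.bar b3) := T.NNc_mul hInt hd hb3'
    obtain ⟨k, hk⟩ := hNNd b15 hb15
    have hdegd : T.deg (d * T.bar b3) = ((m * 3 : ℕ) : ℂ) := by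
      rw [map_mul, hm, hd3']
      push_cast
      ring
    have hbnd : k * 15 ≤ m * 3 :=
      T.coeff_mul_deg_le hInt hNNd hb15 hdegd hk (m := 15) (by rw [hd15]; norm_num)
    have hk0 : k = 0 := by omega
    rw [hk, hk0]
    norm_num
  have hsmQ : ∀ d ∈ T.B, ∀ m : ℕ, T.deg d = (m : ℂ) → m ≤ 5 →
      T.ip (b3 * b15 - b6 - T.bar b15 - T.bar b15) d = 0 := by
    intro d hd m hm hm5
    have hne6 : b6 ≠ d := nedeg hd6 hm (by exact_mod_cast neC 6 m (by omega))
    have hne15 : T.bar b15 ≠ d := nedeg hd15' hm (by exact_mod_cast neC 15 m (by omega))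
    have hipQd : T.ip (b3 * b15 - b6 - T.bar b15 - T.bar b15) d = T.ip (b3 * b15) d := by
      rw [T.ip_sub_left, T.ip_sub_left, T.ip_sub_left, T.ip_ne _ hb6 _ hd hne6,
        T.ip_ne _ hb15' _ hd hne15]
      ring
    rcases Nat.lt_or_ge m 5 with h4 | h5
    · rw [hipQd]
      exact hPSmall d hd m hm (by omega)
    · have hm5' : m = 5 := by omega
      subst hm5'
      obtain ⟨k, hk⟩ := hNNQ d hd
      have hbnd : k * 5 ≤ 9 := T.coeff_mul_deg_le hInt hNNQ hd hdegQ hk hm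
      rcases Nat.eq_zero_or_pos k with h0 | hpos
      · rw [hk, h0]
        norm_num
      · exfalso
        have hk1 : k = 1 := by omega
        have hNNQ' : T.NNc (b3 * b15 - b6 - T.bar b15 - T.bar b15 - d) :=
          T.NNc_sub hNNQ hd (by rw [hk, hk1]) le_rfl
        have hdegQ' : T.deg (b3 * b15 - b6 - T.bar b15 - T.bar b15 - d) = ((4:ℕ) : ℂ) := by
          rw [map_sub, hdegQ, hm]
          push_cast
          norm_num
        have hd1 : d ≠ 1 := nedeg hm (map_one T.deg) (by exact_mod_cast neC 5 1 (by omega))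
        have hP1 : T.ip (b3 * b15) 1 = 0 := by
          rw [T.ip_prod, one_mul]
          exact T.ip_ne _ hb3' _ hb15 (nedeg hd3' hd15 (by norm_num))
        have h1' : T.ip (b3 * b15 - b6 - T.bar b15 - T.bar b15 - d) 1 = 0 := by
          rw [T.ip_sub_left, T.ip_sub_left, T.ip_sub_left, T.ip_sub_left, hP1,
            T.ip_ne _ hb6 _ T.one_mem (nedeg hd6 (map_one T.deg) (by norm_num)),
            T.ip_ne _ hb15' _ T.one_mem (nedeg hd15' (map_one T.deg) (by norm_num)),
            T.ip_ne _ hd _ T.one_mem hd1]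
          ring
        have hz : b3 * b15 - b6 - T.bar b15 - T.bar b15 - d = 0 := by
          apply T.zero_small hInt hSmall hNNQ' hdegQ' h1'
          intro e he m' hm' h3' hle'
          have hne_ed : d ≠ e := nedeg hm hm' (by exact_mod_cast neC 5 m' (by omega))
          have hne6e : b6 ≠ e := nedeg hd6 hm' (by exact_mod_cast neC 6 m' (by omega))
          have hne15e : T.bar b15 ≠ e := nedeg hd15' hm' (by exact_mod_cast neC 15 m' (by omega))
          rw [T.ip_sub_left, T.ip_sub_left, T.ip_sub_left, T.ip_sub_left,
            hPSmall e he m' hm' (by omega),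
            T.ip_ne _ hb6 _ he hne6e, T.ip_ne _ hb15' _ he hne15e, T.ip_ne _ hd _ he hne_ed]
          ring
        have heq : b3 * b15 - b6 - T.bar b15 - T.bar b15 = d := sub_eq_zero.mp hz
        have hdd := congrArg T.deg heq
        rw [hdegQ, hm] at hdd
        norm_num at hdd
  obtain ⟨e, heB, hde, hQe'⟩ := T.eq_basis_of_gap hInt hSmall hNNQ hdegQ hsmQ
  have hQe : b3 * b15 = b6 + T.bar b15 + T.bar b15 + e := by linear_combination hQe'
  -- the x = 1 computation identifying e with bar c
  have ipB3c_b10 : T.ip (T.bar b3 * c) b10 = 1 := by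
    rw [T.ip_prod, T.bar_bar, show b10 * b3 = b3 * b10 from mul_comm _ _, hu,
      T.ip_add_left, T.ip_add_left,
      T.ip_ne _ hb6' _ hcB (nedeg hd6' hdcC (by norm_num)),
      T.ip_ne _ hb15 _ hcB (nedeg hd15 hdcC (by norm_num)),
      T.ip_self _ hcB]
    ring
  have ipb6b15_b10 : T.ip (b6 * b15) b10 = 3 := by
    rw [hb6b15]
    simp only [map_add, map_sub, LinearMap.add_apply, LinearMap.sub_apply]
    rw [T.ip_ne _ hc8 _ hb10 (nedeg hd8 hd10 (by norm_num)), T.ip_self _ hb10,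
      T.ip_ne _ T.one_mem _ hb10 (nedeg (map_one T.deg) hd10 (by norm_num)),
      ht', ipB3c_b10]
    ring
  have hb1 : T.bar (b10 * b6) = b10 * T.bar b6 := by rw [map_mul, hreal10]
  have wayB : T.ip (b6 * b15) b10 = T.ip (b10 * b6) (T.bar b15) := by
    rw [T.ip_prod]
    conv_lhs => rw [← hb1, ← T.bar_bar b15]
    exact T.ip_bar (b10 * b6) (T.bar b15)
  have ipb10b6_b15' : T.ip (b10 * b6) (T.bar b15) = 2 + T.ip (b3 * c) (T.bar b15) := by
    rw [hb10b6]
    simp only [map_add, LinearMap.add_apply]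
    rw [T.ip_ne _ hb3' _ hb15' (nedeg hd3' hd15' (by norm_num)), T.ip_self _ hb15']
    ring
  have hx : T.ip (b3 * c) (T.bar b15) = 1 := by
    have h := ipb6b15_b10
    rw [wayB, ipb10b6_b15'] at h
    linear_combination h
  have ipPc' : T.ip (b3 * b15) (T.bar c) = 1 := by
    rw [T.ip_prod]
    have h1 : T.bar (b3 * c) = T.bar c * T.bar b3 := by rw [map_mul, mul_comm]
    rw [← h1, ← show T.bar (T.bar b15) = b15 from T.bar_bar b15, T.ip_bar]
    exact hx
  have hec : e = T.bar c := by
    by_contra hne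
    have h := ipPc'
    rw [hQe] at h
    simp only [map_add, LinearMap.add_apply] at h
    rw [T.ip_ne _ hb6 _ hcbar (nedeg hd6 hdc' (by norm_num)),
      T.ip_ne _ hb15' _ hcbar (nedeg hd15' hdc' (by norm_num)),
      T.ip_ne _ heB _ hcbar hne] at h
    norm_num at h
  refine ⟨b15, hb15, hd15, h15, h2, T.bar c, hcbar, hdc', ?_, ?_, ?_⟩
  · rw [T.bar_bar]
    linear_combination hu
  · linear_combination hQe + hec
  · rw [T.bar_bar]
    linear_combination hb6sq
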